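/- Let p, q ∈ [1, ∞), α ∈ (−1, q−1), and ℓ = 1 − (1+α)/q. There exists N = N(p, q, α) > 0 such that for every f : ℝ × [0, ∞) → ℝ that is continuously differentiable up to the boundary and satisfies ‖Df‖_{L_{p,q}(ℝ^2_+, μ)} < ∞, one has ‖f(·,0)‖_{b^ℓ_{p,q}(ℝ)} ≤ N (∫_0^∞ (∫_ℝ |Df(x,y)|^p dx)^{q/p} y^α dy)^{1/q}, where Df = (D_x f, D_y f) is the full gradient. -/

import Mathlib

open MeasureTheory ENNReal Set Filter

/-- lintegral of `s ^ c` on `Ioc 0 a`, for `c > -1`. -/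
lemma lint_rpow_Ioc {c a : ℝ} (hc : -1 < c) (ha : 0 < a) :
    ∫⁻ s in Set.Ioc 0 a, ENNReal.ofReal (s ^ c) = ENNReal.ofReal (a ^ (c + 1) / (c + 1)) := by
  have hInt : IntegrableOn (fun s : ℝ => s ^ c) (Set.Ioc 0 a) := by
    have := intervalIntegral.intervalIntegrable_rpow' (a := 0) (b := a) hc
    rwa [intervalIntegrable_iff_integrableOn_Ioc_of_le ha.le] at this
  rw [← ofReal_integral_eq_lintegral_ofReal hInt]
  · congr 1
    have h1 : ∫ s in Set.Ioc 0 a, s ^ c = ∫ s in (0 : ℝ)..a, s ^ c :=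
      (intervalIntegral.integral_of_le ha.le).symm
    rw [h1, integral_rpow (Or.inl hc)]
    rw [Real.zero_rpow (by linarith : c + 1 ≠ 0)]
    ring_nf
  · filter_upwards [ae_restrict_mem measurableSet_Ioc] with x hx
    exact Real.rpow_nonneg hx.1.le c

/-- lintegral of `s ^ c` on `Ioi a`, for `c < -1`, `a > 0`. -/
lemma lint_rpow_Ioi {c a : ℝ} (hc : c < -1) (ha : 0 < a) :
    ∫⁻ s in Set.Ioi a, ENNReal.ofReal (s ^ c) = ENNReal.ofReal (-a ^ (c + 1) / (c + 1)) := by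
  have hInt : IntegrableOn (fun s : ℝ => s ^ c) (Set.Ioi a) := integrableOn_Ioi_rpow_of_lt hc ha
  rw [← ofReal_integral_eq_lintegral_ofReal hInt]
  · rw [integral_Ioi_rpow_of_lt hc ha]
  · filter_upwards [ae_restrict_mem measurableSet_Ioi] with x hx
    exact Real.rpow_nonneg (le_of_lt (lt_trans ha hx)) c

/-- Minkowski's integral inequality for `ℝ≥0∞`-valued kernels. -/
lemma lintegral_minkowski {X S : Type*} [MeasurableSpace X] [MeasurableSpace S]
    (μ : Measure X) (ν : Measure S) [SigmaFinite μ] [SigmaFinite ν]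
    {p : ℝ} (hp : 1 ≤ p) {F : X → S → ℝ≥0∞} (hF : Measurable (Function.uncurry F)) :
    (∫⁻ x, (∫⁻ s, F x s ∂ν) ^ p ∂μ) ^ (1 / p)
      ≤ ∫⁻ s, (∫⁻ x, F x s ^ p ∂μ) ^ (1 / p) ∂ν := by
  have hp0 : 0 < p := lt_of_lt_of_le one_pos hp
  set Φ : X → ℝ≥0∞ := fun x => ∫⁻ s, F x s ∂ν with hΦdef
  have hΦ : Measurable Φ := hF.lintegral_prod_right
  rcases eq_or_lt_of_le hp with hp1 | hp1
  · -- p = 1 : Tonelli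
    subst hp1
    simp only [ENNReal.rpow_one, one_div_one]
    exact le_of_eq (lintegral_lintegral_swap hF.aemeasurable)
  -- p > 1
  set R : ℝ≥0∞ := ∫⁻ s, (∫⁻ x, F x s ^ p ∂μ) ^ (1 / p) ∂ν with hR
  set q : ℝ := p.conjExponent with hqdef
  have hpq : p.HolderConjugate q := Real.HolderConjugate.conjExponent hp1
  have hq0 : 0 < q := hpq.symm.pos
  have hpq1 : (p - 1) * q = p := by
    rw [hqdef, Real.conjExponent]
    rw [mul_comm]
    exact div_mul_cancel₀ p (by linarith : p - 1 ≠ 0)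
  -- the truncations
  set ψ : ℕ → X → ℝ≥0∞ := fun n =>
    (spanningSets μ n).indicator (fun x => min (Φ x) n) with hψdef
  have hψmeas : ∀ n, Measurable (ψ n) := fun n =>
    (hΦ.min measurable_const).indicator (measurableSet_spanningSets μ n)
  have hψleΦ : ∀ n x, ψ n x ≤ Φ x := by
    intro n x
    by_cases hx : x ∈ spanningSets μ n
    · simp [hψdef, hx, min_le_left]
    · simp [hψdef, hx]
  set A : ℕ → ℝ≥0∞ := fun n => ∫⁻ x, ψ n x ^ p ∂μ with hA
  have hAfin : ∀ n, A n ≠ ⊤ := by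
    intro n
    have hb : ∀ x, ψ n x ^ p ≤ (spanningSets μ n).indicator (fun _ => (n : ℝ≥0∞) ^ p) x := by
      intro x
      by_cases hx : x ∈ spanningSets μ n
      · simp only [hψdef, hx, Set.indicator_of_mem]
        exact ENNReal.rpow_le_rpow (min_le_right _ _) hp0.le
      · simp [hψdef, hx, ENNReal.zero_rpow_of_pos hp0]
    refine ne_of_lt (lt_of_le_of_lt (lintegral_mono hb) ?_)
    rw [lintegral_indicator (measurableSet_spanningSets μ n), setLIntegral_const]
    exact ENNReal.mul_lt_top
      (ENNReal.rpow_lt_top_of_nonneg hp0.le (ENNReal.natCast_ne_top n))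
      (measure_spanningSets_lt_top μ n)
  -- the core duality estimate
  have hkey : ∀ n, A n ≤ A n ^ (1 / q) * R := by
    intro n
    have h1 : A n ≤ ∫⁻ x, ψ n x ^ (p - 1) * Φ x ∂μ := by
      rw [hA]
      refine lintegral_mono fun x => ?_
      have hsplit : ψ n x ^ p = ψ n x ^ (p - 1) * ψ n x := by
        conv_lhs => rw [show p = p - 1 + 1 by ring]
        rw [ENNReal.rpow_add_of_nonneg _ _ (by linarith) zero_le_one, ENNReal.rpow_one]
      rw [hsplit]
      exact mul_le_mul_right (hψleΦ n x) _
    have h2 : ∫⁻ x, ψ n x ^ (p - 1) * Φ x ∂μ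
        = ∫⁻ s, ∫⁻ x, ψ n x ^ (p - 1) * F x s ∂μ ∂ν := by
      have heq : ∀ x, ψ n x ^ (p - 1) * Φ x = ∫⁻ s, ψ n x ^ (p - 1) * F x s ∂ν := by
        intro x
        have hc : Measurable fun s => F x s := hF.comp measurable_prodMk_left
        simp only [hΦdef]
        rw [lintegral_const_mul _ hc]
      simp_rw [heq]
      exact lintegral_lintegral_swap (by
        apply AEMeasurable.mul
        · exact (((hψmeas n).comp measurable_fst).pow_const _).aemeasurable
        · exact hF.aemeasurable)
    have h3 : ∀ s, ∫⁻ x, ψ n x ^ (p - 1) * F x s ∂μ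
        ≤ A n ^ (1 / q) * (∫⁻ x, F x s ^ p ∂μ) ^ (1 / p) := by
      intro s
      have hc2 : Measurable fun x => F x s := hF.comp measurable_prodMk_right
      calc ∫⁻ x, ψ n x ^ (p - 1) * F x s ∂μ
          ≤ (∫⁻ x, (ψ n x ^ (p - 1)) ^ q ∂μ) ^ (1 / q) * (∫⁻ x, F x s ^ p ∂μ) ^ (1 / p) :=
            ENNReal.lintegral_mul_le_Lp_mul_Lq μ hpq.symm
              (((hψmeas n).pow_const _).aemeasurable) hc2.aemeasurable
        _ = A n ^ (1 / q) * (∫⁻ x, F x s ^ p ∂μ) ^ (1 / p) := by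
            congr 2
            refine lintegral_congr fun x => ?_
            rw [← ENNReal.rpow_mul, hpq1]
    calc A n ≤ ∫⁻ s, ∫⁻ x, ψ n x ^ (p - 1) * F x s ∂μ ∂ν := h1.trans (le_of_eq h2)
      _ ≤ ∫⁻ s, A n ^ (1 / q) * (∫⁻ x, F x s ^ p ∂μ) ^ (1 / p) ∂ν :=
          lintegral_mono fun s => h3 s
      _ = A n ^ (1 / q) * R := by
          rw [hR, lintegral_const_mul' _ _
            (ENNReal.rpow_ne_top_of_nonneg (by positivity) (hAfin n))]
  -- deduce `A n ^ (1/p) ≤ R`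
  have hAn : ∀ n, A n ^ (1 / p) ≤ R := by
    intro n
    rcases eq_or_ne (A n) 0 with h0 | h0
    · rw [h0, ENNReal.zero_rpow_of_pos (by positivity)]
      exact bot_le
    · have h1q : 1 / p + 1 / q = 1 := by
        rw [one_div, one_div]; exact hpq.inv_add_inv_eq_one
      have hmul : A n ^ (1 / p) * A n ^ (1 / q) = A n := by
        rw [← ENNReal.rpow_add_of_nonneg _ _ (by positivity) (by positivity), h1q,
          ENNReal.rpow_one]
      have h2 : A n ^ (1 / p) * A n ^ (1 / q) ≤ R * A n ^ (1 / q) := by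
        rw [hmul, mul_comm R _]
        rw [mul_comm (A n ^ (1 / q)) R] at *
        calc A n ≤ A n ^ (1/q) * R := hkey n
          _ = R * A n ^ (1/q) := mul_comm _ _
      have hne0 : A n ^ (1 / q) ≠ 0 := by
        simp only [Ne, ENNReal.rpow_eq_zero_iff, not_or, not_and_or]
        exact ⟨Or.inl h0, Or.inl (hAfin n)⟩
      have hneT : A n ^ (1 / q) ≠ ⊤ :=
        ENNReal.rpow_ne_top_of_nonneg (by positivity) (hAfin n)
      exact (ENNReal.mul_le_mul_iff_left hne0 hneT).mp h2
  -- Monotone convergence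
  have hmono : ∀ x, Monotone fun n => ψ n x ^ p := by
    intro x m k hmk
    apply ENNReal.rpow_le_rpow _ hp0.le
    by_cases hm : x ∈ spanningSets μ m
    · have hk : x ∈ spanningSets μ k := monotone_spanningSets μ hmk hm
      simp only [hψdef, Set.indicator_of_mem, hm, hk]
      exact min_le_min (le_refl _) (by exact_mod_cast Nat.cast_le.mpr hmk)
    · simp [hψdef, hm]
  have htend : ∀ x, Tendsto (fun n => ψ n x ^ p) atTop (nhds (Φ x ^ p)) := by
    intro x
    have h1 : Tendsto (fun n => ψ n x) atTop (nhds (Φ x)) := by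
      obtain ⟨m, hm⟩ : ∃ m, x ∈ spanningSets μ m := by
        have hx : x ∈ ⋃ n, spanningSets μ n := by rw [iUnion_spanningSets]; trivial
        exact Set.mem_iUnion.mp hx
      have hev : ∀ᶠ n in atTop, ψ n x = min (Φ x) n := by
        filter_upwards [eventually_ge_atTop m] with n hn
        simp [hψdef, monotone_spanningSets μ hn hm]
      rw [tendsto_congr' hev]
      rcases eq_or_ne (Φ x) ⊤ with htop | htop
      · have hmin : ∀ n : ℕ, min (Φ x) (n : ℝ≥0∞) = (n : ℝ≥0∞) := fun n => by
          simp [htop]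
        simp only [hmin, htop]
        exact ENNReal.tendsto_nat_nhds_top
      · obtain ⟨m', hm'⟩ := ENNReal.exists_nat_gt htop
        have hev2 : ∀ᶠ n : ℕ in atTop, min (Φ x) (n : ℝ≥0∞) = Φ x := by
          filter_upwards [eventually_ge_atTop m'] with n hn
          exact min_eq_left (le_trans hm'.le (by exact_mod_cast Nat.cast_le.mpr hn))
        rw [tendsto_congr' hev2]
        exact tendsto_const_nhds
    exact (ENNReal.continuous_rpow_const.tendsto (Φ x)).comp h1
  have hlim : Tendsto A atTop (nhds (∫⁻ x, Φ x ^ p ∂μ)) := by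
    apply lintegral_tendsto_of_tendsto_of_monotone
    · exact fun n => ((hψmeas n).pow_const _).aemeasurable
    · exact Eventually.of_forall hmono
    · exact Eventually.of_forall htend
  have hfin : (∫⁻ x, Φ x ^ p ∂μ) ≤ R ^ p := by
    refine le_of_tendsto hlim (Eventually.of_forall fun n => ?_)
    have h := ENNReal.rpow_le_rpow (hAn n) hp0.le
    rwa [← ENNReal.rpow_mul, one_div_mul_cancel hp0.ne', ENNReal.rpow_one] at h
  calc (∫⁻ x, Φ x ^ p ∂μ) ^ (1 / p) ≤ (R ^ p) ^ (1 / p) :=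
        ENNReal.rpow_le_rpow hfin (by positivity)
    _ = R := by rw [← ENNReal.rpow_mul, mul_one_div_cancel hp0.ne', ENNReal.rpow_one]

/-- Tonelli for the region `{(r,s) : 0 < r, 0 < s ≤ 2r}`. -/
lemma swap_region {H W : ℝ → ℝ≥0∞} (hH : Measurable H) (hW : Measurable W) :
    ∫⁻ r in Set.Ioi (0:ℝ), (∫⁻ s in Set.Ioc 0 (2*r), H s) * W r
      = ∫⁻ s in Set.Ioi (0:ℝ), H s * ∫⁻ r in Set.Ici (s/2), W r := by
  have hind : ∀ r : ℝ, (∫⁻ s in Set.Ioc 0 (2*r), H s) * W r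
      = ∫⁻ s, (Set.Ioc 0 (2*r)).indicator H s * W r := by
    intro r
    rw [lintegral_mul_const _ (hH.indicator measurableSet_Ioc),
      lintegral_indicator measurableSet_Ioc]
  simp_rw [hind]
  have hm : Measurable fun rs : ℝ × ℝ => (Set.Ioc 0 (2*rs.1)).indicator H rs.2 * W rs.1 := by
    have h1 : (fun rs : ℝ × ℝ => (Set.Ioc 0 (2*rs.1)).indicator H rs.2)
        = ({rs : ℝ × ℝ | 0 < rs.2 ∧ rs.2 ≤ 2*rs.1}).indicator (fun rs => H rs.2) := by
      ext rs
      by_cases h : rs.2 ∈ Set.Ioc 0 (2*rs.1)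
      · rw [Set.indicator_of_mem h, Set.indicator_of_mem (by exact h)]
      · rw [Set.indicator_of_notMem h, Set.indicator_of_notMem (by exact h)]
    have hset : MeasurableSet {rs : ℝ × ℝ | 0 < rs.2 ∧ rs.2 ≤ 2*rs.1} := by
      apply MeasurableSet.inter
      · exact measurableSet_lt measurable_const measurable_snd
      · exact measurableSet_le measurable_snd (measurable_fst.const_mul 2)
    apply Measurable.mul
    · rw [h1]
      exact (hH.comp measurable_snd).indicator hset
    · exact hW.comp measurable_fst
  rw [lintegral_lintegral_swap hm.aemeasurable]
  have hout : ∫⁻ s, ∫⁻ r in Set.Ioi (0:ℝ), (Set.Ioc 0 (2*r)).indicator H s * W r ∂volume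
      = ∫⁻ s in Set.Ioi (0:ℝ), ∫⁻ r in Set.Ioi (0:ℝ), (Set.Ioc 0 (2*r)).indicator H s * W r := by
    rw [← lintegral_indicator measurableSet_Ioi]
    apply lintegral_congr
    intro s
    by_cases hs : s ∈ Set.Ioi (0:ℝ)
    · rw [Set.indicator_of_mem hs]
    · rw [Set.indicator_of_notMem hs]
      have : ∀ r : ℝ, (Set.Ioc 0 (2*r)).indicator H s * W r = 0 := by
        intro r
        have : s ∉ Set.Ioc 0 (2*r) := fun hmem => hs (Set.mem_Ioi.mpr hmem.1)
        rw [Set.indicator_of_notMem this, zero_mul]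
      simp [this]
  rw [hout]
  apply setLIntegral_congr_fun measurableSet_Ioi
  intro s hs
  have hinner : ∀ r : ℝ, (Set.Ioc 0 (2*r)).indicator H s * W r
      = (Set.Ici (s/2)).indicator (fun r => H s * W r) r := by
    intro r
    by_cases hr : s ≤ 2*r
    · have h1 : s ∈ Set.Ioc 0 (2*r) := ⟨hs, hr⟩
      have h2 : r ∈ Set.Ici (s/2) := by
        rw [Set.mem_Ici]; linarith
      rw [Set.indicator_of_mem h1, Set.indicator_of_mem h2]
    · have h1 : s ∉ Set.Ioc 0 (2*r) := fun hmem => hr hmem.2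
      have h2 : r ∉ Set.Ici (s/2) := by
        rw [Set.mem_Ici]; intro h; apply hr; linarith
      rw [Set.indicator_of_notMem h1, Set.indicator_of_notMem h2, zero_mul]
  simp_rw [hinner]
  rw [lintegral_indicator measurableSet_Ici, Measure.restrict_restrict measurableSet_Ici]
  have hsub : Set.Ici (s/2) ∩ Set.Ioi 0 = Set.Ici (s/2) := by
    apply Set.inter_eq_self_of_subset_left
    intro r hr
    exact lt_of_lt_of_le (by linarith [Set.mem_Ioi.mp hs] : (0:ℝ) < s/2) hr
  rw [hsub, lintegral_const_mul _ hW]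

lemma meas_orpow (c : ℝ) : Measurable fun x : ℝ => ENNReal.ofReal (x ^ c) := by fun_prop

/-- `∫⁻ r in Ici a = ∫⁻ r in Ioi a` for volume. -/
lemma lint_Ici_eq_Ioi (a : ℝ) (f : ℝ → ℝ≥0∞) :
    ∫⁻ r in Set.Ici a, f r = ∫⁻ r in Set.Ioi a, f r := by
  rw [Measure.restrict_congr_set Ioi_ae_eq_Ici.symm]

/-- tail power integral in convenient form -/
lemma tail_pow {σ' s : ℝ} (hσ' : 0 < σ') (hs : 0 < s) :
    ∫⁻ r in Set.Ici (s/2), ENNReal.ofReal (r ^ (-σ' - 1))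
      = ENNReal.ofReal ((2:ℝ) ^ σ' / σ') * ENNReal.ofReal (s ^ (-σ')) := by
  rw [lint_Ici_eq_Ioi, lint_rpow_Ioi (by linarith) (by linarith)]
  rw [← ENNReal.ofReal_mul (by positivity)]
  congr 1
  have h1 : -σ' - 1 + 1 = -σ' := by ring
  rw [h1]
  have h2 : (s/2 : ℝ) ^ (-σ') = s ^ (-σ') * 2 ^ σ' := by
    rw [div_eq_mul_inv, Real.mul_rpow hs.le (by norm_num), ← Real.rpow_neg_one 2,
      ← Real.rpow_mul (by norm_num : (0:ℝ) ≤ 2)]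
    norm_num
  rw [h2]
  field_simp

/-- Hardy's inequality, in the convenient `2r` form. -/
lemma hardy2 {q σ : ℝ} (hq : 1 ≤ q)
    (hσ0 : 0 < σ) (hσq : σ < q) :
    ∃ C : ℝ, 0 < C ∧ ∀ {G : ℝ → ℝ≥0∞}, Measurable G →
    (∫⁻ r in Set.Ioi (0:ℝ), (∫⁻ s in Set.Ioc 0 (2*r), G s) ^ q * ENNReal.ofReal (r ^ (-σ - 1)))
      ≤ ENNReal.ofReal C * ∫⁻ s in Set.Ioi (0:ℝ), (G s) ^ q * ENNReal.ofReal (s ^ (q - 1 - σ)) := by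
  have hq0 : 0 < q := lt_of_lt_of_le one_pos hq
  rcases eq_or_lt_of_le hq with hq1 | hq1
  · -- q = 1
    refine ⟨(2:ℝ) ^ σ / σ, by positivity, ?_⟩
    intro G hG
    refine le_of_eq ?_
    have hWm : Measurable fun r : ℝ => ENNReal.ofReal (r ^ (-σ - 1)) := meas_orpow _
    calc ∫⁻ r in Set.Ioi (0:ℝ), (∫⁻ s in Set.Ioc 0 (2*r), G s) ^ q * ENNReal.ofReal (r ^ (-σ - 1))
        = ∫⁻ r in Set.Ioi (0:ℝ), (∫⁻ s in Set.Ioc 0 (2*r), G s) * ENNReal.ofReal (r ^ (-σ - 1)) := by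
          apply lintegral_congr
          intro r
          rw [← hq1, ENNReal.rpow_one]
      _ = ∫⁻ s in Set.Ioi (0:ℝ), G s * ∫⁻ r in Set.Ici (s/2), ENNReal.ofReal (r ^ (-σ - 1)) :=
          swap_region hG hWm
      _ = ∫⁻ s in Set.Ioi (0:ℝ), ENNReal.ofReal ((2:ℝ) ^ σ / σ) * (G s * ENNReal.ofReal (s ^ (-σ))) := by
          apply setLIntegral_congr_fun measurableSet_Ioi
          intro s hs
          beta_reduce
          rw [tail_pow hσ0 hs]
          ring
      _ = ENNReal.ofReal ((2:ℝ) ^ σ / σ) * ∫⁻ s in Set.Ioi (0:ℝ), G s * ENNReal.ofReal (s ^ (-σ)) := by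
          rw [lintegral_const_mul' _ _ ENNReal.ofReal_ne_top]
      _ = ENNReal.ofReal ((2:ℝ) ^ σ / σ) * ∫⁻ s in Set.Ioi (0:ℝ), G s ^ q * ENNReal.ofReal (s ^ (q - 1 - σ)) := by
          congr 1
          apply lintegral_congr
          intro s
          rw [← hq1, ENNReal.rpow_one]
          norm_num
  · -- q > 1
    set q' : ℝ := q.conjExponent with hq'def
    have hqq' : q.HolderConjugate q' := Real.HolderConjugate.conjExponent hq1
    have hq'0 : 0 < q' := hqq'.symm.pos
    set θ : ℝ := (q - 1 - σ/2) / q with hθdef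
    set τ : ℝ := (q - 1 - σ/2) / (q - 1) with hτdef
    have hq1' : (0:ℝ) < q - 1 := by linarith
    have hτ1 : τ < 1 := by
      rw [hτdef, div_lt_one hq1']
      linarith
    have hθq : θ * q = q - 1 - σ/2 := by
      rw [hθdef]; field_simp
    have hθq' : -θ * q' = -τ := by
      rw [hθdef, hτdef, hq'def, Real.conjExponent]
      field_simp
    have h1τ : 0 < 1 - τ := by linarith
    have hq1q : 1/q' * q = q - 1 := by
      rw [hq'def, Real.conjExponent]
      field_simp
    set C1 : ℝ := (2:ℝ) ^ (σ/2) * (1 - τ) ^ (1 - q) with hC1def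
    have hC1 : 0 < C1 := by positivity
    set C2 : ℝ := (2:ℝ) ^ (σ/2) / (σ/2) with hC2def
    have hC2 : 0 < C2 := by positivity
    refine ⟨C1 * C2, by positivity, ?_⟩
    intro G hG
    set H : ℝ → ℝ≥0∞ := fun s => G s ^ q * ENNReal.ofReal (s ^ (θ * q)) with hHdef
    have hHm : Measurable H := (hG.pow_const _).mul (meas_orpow _)
    set W : ℝ → ℝ≥0∞ := fun r => ENNReal.ofReal (r ^ (-(σ/2) - 1)) with hWdef
    have hWm : Measurable W := meas_orpow _
    -- Hölder bound for each r > 0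
    have hB : ∀ r : ℝ, 0 < r →
        (∫⁻ s in Set.Ioc 0 (2*r), G s) ^ q
          ≤ (∫⁻ s in Set.Ioc 0 (2*r), H s) * ENNReal.ofReal (C1 * r ^ (σ/2)) := by
      intro r hr
      have h2r : (0:ℝ) < 2*r := by linarith
      have hsplit : ∫⁻ s in Set.Ioc 0 (2*r), G s
          = ∫⁻ s in Set.Ioc 0 (2*r),
              (G s * ENNReal.ofReal (s ^ θ)) * ENNReal.ofReal (s ^ (-θ)) := by
        apply setLIntegral_congr_fun measurableSet_Ioc
        intro s hs
        beta_reduce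
        rw [mul_assoc, ← ENNReal.ofReal_mul (Real.rpow_nonneg hs.1.le θ),
          ← Real.rpow_add hs.1]
        simp
      have hHolder := ENNReal.lintegral_mul_le_Lp_mul_Lq
        (volume.restrict (Set.Ioc 0 (2*r))) hqq'
        (f := fun s => G s * ENNReal.ofReal (s ^ θ))
        (g := fun s => ENNReal.ofReal (s ^ (-θ)))
        ((hG.mul (meas_orpow _)).aemeasurable)
        ((meas_orpow _).aemeasurable)
      simp only [Pi.mul_apply] at hHolder
      have hA : ∫⁻ s in Set.Ioc 0 (2*r), (G s * ENNReal.ofReal (s ^ θ)) ^ q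
          = ∫⁻ s in Set.Ioc 0 (2*r), H s := by
        apply setLIntegral_congr_fun measurableSet_Ioc
        intro s hs
        beta_reduce
        rw [ENNReal.mul_rpow_of_nonneg _ _ hq0.le, hHdef,
          ENNReal.ofReal_rpow_of_nonneg (Real.rpow_nonneg hs.1.le θ) hq0.le,
          ← Real.rpow_mul hs.1.le]
      have hV : ∫⁻ s in Set.Ioc 0 (2*r), ENNReal.ofReal (s ^ (-θ)) ^ q'
          = ENNReal.ofReal ((2*r) ^ (-τ + 1) / (-τ + 1)) := by
        have heq : ∫⁻ s in Set.Ioc 0 (2*r), ENNReal.ofReal (s ^ (-θ)) ^ q'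
            = ∫⁻ s in Set.Ioc 0 (2*r), ENNReal.ofReal (s ^ (-τ)) := by
          apply setLIntegral_congr_fun measurableSet_Ioc
          intro s hs
          beta_reduce
          rw [ENNReal.ofReal_rpow_of_nonneg (Real.rpow_nonneg hs.1.le _) hq'0.le,
            ← Real.rpow_mul hs.1.le, hθq']
        rw [heq, lint_rpow_Ioc (by linarith) h2r]
      calc (∫⁻ s in Set.Ioc 0 (2*r), G s) ^ q
          ≤ ((∫⁻ s in Set.Ioc 0 (2*r), (G s * ENNReal.ofReal (s ^ θ)) ^ q) ^ (1/q)
              * (∫⁻ s in Set.Ioc 0 (2*r), ENNReal.ofReal (s ^ (-θ)) ^ q') ^ (1/q')) ^ q := by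
            rw [hsplit]
            exact ENNReal.rpow_le_rpow hHolder hq0.le
        _ = (∫⁻ s in Set.Ioc 0 (2*r), H s)
              * (ENNReal.ofReal ((2*r) ^ (-τ + 1) / (-τ + 1))) ^ (1/q' * q) := by
            rw [hA, hV, ENNReal.mul_rpow_of_nonneg _ _ hq0.le,
              ← ENNReal.rpow_mul, ← ENNReal.rpow_mul,
              one_div_mul_cancel hq0.ne', ENNReal.rpow_one]
        _ = (∫⁻ s in Set.Ioc 0 (2*r), H s) * ENNReal.ofReal (C1 * r ^ (σ/2)) := by
            congr 1
            rw [hq1q, ENNReal.ofReal_rpow_of_pos (div_pos (Real.rpow_pos_of_pos h2r _) (by linarith))]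
            congr 1
            rw [show -τ + 1 = 1 - τ by ring]
            rw [Real.div_rpow (Real.rpow_nonneg h2r.le _) h1τ.le,
              ← Real.rpow_mul h2r.le]
            have he2 : (1 - τ) * (q - 1) = σ/2 := by
              rw [hτdef]
              field_simp
              ring
            rw [he2, Real.mul_rpow (by norm_num : (0:ℝ) ≤ 2) hr.le, hC1def,
              show (1 - q) = -(q-1) by ring, Real.rpow_neg h1τ.le]
            field_simp
    calc ∫⁻ r in Set.Ioi (0:ℝ), (∫⁻ s in Set.Ioc 0 (2*r), G s) ^ q * ENNReal.ofReal (r ^ (-σ - 1))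
        ≤ ∫⁻ r in Set.Ioi (0:ℝ),
            (∫⁻ s in Set.Ioc 0 (2*r), H s) * ENNReal.ofReal (C1 * r ^ (σ/2))
              * ENNReal.ofReal (r ^ (-σ - 1)) := by
          apply setLIntegral_mono' measurableSet_Ioi
          intro r hr
          exact mul_le_mul_left (hB r hr) _
      _ = ∫⁻ r in Set.Ioi (0:ℝ),
            ENNReal.ofReal C1 * ((∫⁻ s in Set.Ioc 0 (2*r), H s) * W r) := by
          apply setLIntegral_congr_fun measurableSet_Ioi
          intro r hr
          beta_reduce
          rw [ENNReal.ofReal_mul hC1.le, hWdef]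
          simp only
          rw [mul_assoc, mul_assoc, ← ENNReal.ofReal_mul (Real.rpow_nonneg hr.le _),
            ← Real.rpow_add hr, show σ/2 + (-σ - 1) = -(σ/2) - 1 by ring]
          ring
      _ = ENNReal.ofReal C1 * ∫⁻ r in Set.Ioi (0:ℝ), (∫⁻ s in Set.Ioc 0 (2*r), H s) * W r :=
          lintegral_const_mul' _ _ ENNReal.ofReal_ne_top
      _ = ENNReal.ofReal C1 * ∫⁻ s in Set.Ioi (0:ℝ), H s * ∫⁻ r in Set.Ici (s/2), W r := by
          rw [swap_region hHm hWm]
      _ = ENNReal.ofReal C1 * ∫⁻ s in Set.Ioi (0:ℝ),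
            ENNReal.ofReal C2 * (G s ^ q * ENNReal.ofReal (s ^ (q - 1 - σ))) := by
          congr 1
          apply setLIntegral_congr_fun measurableSet_Ioi
          intro s hs
          simp only [hWdef, hHdef]
          rw [tail_pow (by linarith : (0:ℝ) < σ/2) hs, hθq,
            show (q - 1 - σ) = (q - 1 - σ/2) + (-(σ/2)) by ring,
            Real.rpow_add hs, ENNReal.ofReal_mul (Real.rpow_nonneg hs.le _)]
          rw [hC2def]
          ring
      _ = ENNReal.ofReal (C1 * C2)
            * ∫⁻ s in Set.Ioi (0:ℝ), G s ^ q * ENNReal.ofReal (s ^ (q - 1 - σ)) := by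
          rw [lintegral_const_mul' _ _ ENNReal.ofReal_ne_top, ← mul_assoc,
            ← ENNReal.ofReal_mul hC1.le]

lemma ftc_bound {φ D : ℝ → ℝ} {a b : ℝ} (hab : a ≤ b)
    (hD : ∀ s ∈ Set.uIcc a b, HasDerivAt φ (D s) s)
    (hDc : ContinuousOn D (Set.uIcc a b)) :
    ENNReal.ofReal |φ b - φ a| ≤ ∫⁻ s in Set.Ioc a b, ENNReal.ofReal |D s| := by
  have hInt : IntervalIntegrable D volume a b := hDc.intervalIntegrable
  have hftc : ∫ s in a..b, D s = φ b - φ a :=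
    intervalIntegral.integral_eq_sub_of_hasDerivAt hD hInt
  have hIntOn : IntegrableOn D (Set.Ioc a b) :=
    (intervalIntegrable_iff_integrableOn_Ioc_of_le hab).mp hInt
  have h1 : |φ b - φ a| ≤ ∫ s in Set.Ioc a b, |D s| := by
    rw [← hftc, intervalIntegral.integral_of_le hab]
    calc |∫ s in Set.Ioc a b, D s| ≤ ∫ s in Set.Ioc a b, ‖D s‖ :=
          norm_integral_le_integral_norm D
      _ = ∫ s in Set.Ioc a b, |D s| := by simp [Real.norm_eq_abs]
  calc ENNReal.ofReal |φ b - φ a| ≤ ENNReal.ofReal (∫ s in Set.Ioc a b, |D s|) :=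
        ENNReal.ofReal_le_ofReal h1
    _ = ∫⁻ s in Set.Ioc a b, ENNReal.ofReal |D s| := by
        rw [ofReal_integral_eq_lintegral_ofReal hIntOn.abs
          (Eventually.of_forall fun s => abs_nonneg _)]

section
variable {f : ℝ × ℝ → ℝ} (hf : ContDiffOn ℝ 1 f (Set.univ ×ˢ Set.Ici 0))

/-- differentiability in the open half plane, with the plain `fderiv` -/
lemma hasFDeriv_of_pos (hf : ContDiffOn ℝ 1 f (Set.univ ×ˢ Set.Ici 0))
    {z : ℝ × ℝ} (hz : 0 < z.2) :
    HasFDerivAt f (fderiv ℝ f z) z := by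
  have hmemo : z ∈ (Set.univ ×ˢ Set.Ioi 0 : Set (ℝ × ℝ)) := ⟨trivial, hz⟩
  have hmem : (Set.univ ×ˢ Set.Ici 0 : Set (ℝ × ℝ)) ∈ nhds z :=
    mem_of_superset ((isOpen_univ.prod isOpen_Ioi).mem_nhds hmemo)
      (Set.prod_mono subset_rfl Set.Ioi_subset_Ici_self)
  exact ((hf.differentiableOn one_ne_zero).differentiableAt hmem).hasFDerivAt

lemma fderiv_contOn (hf : ContDiffOn ℝ 1 f (Set.univ ×ˢ Set.Ici 0)) :
    ContinuousOn (fderiv ℝ f) (Set.univ ×ˢ Set.Ioi 0) :=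
  (hf.mono (Set.prod_mono subset_rfl Set.Ioi_subset_Ici_self)).continuousOn_fderiv_of_isOpen
    (isOpen_univ.prod isOpen_Ioi) le_rfl

lemma norm01 : ‖((0:ℝ), (1:ℝ))‖ = 1 := by
  rw [Prod.norm_def]
  simp

lemma norm10 : ‖((1:ℝ), (0:ℝ))‖ = 1 := by
  rw [Prod.norm_def]
  simp

/-- vertical pointwise FTC bound -/
lemma ptwise_vert (hf : ContDiffOn ℝ 1 f (Set.univ ×ˢ Set.Ici 0)) {x t : ℝ} (ht : 0 < t) :
    ENNReal.ofReal |f (x, t) - f (x, 0)| ≤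
      ∫⁻ s in Set.Ioc 0 t, ENNReal.ofReal ‖fderiv ℝ f (x, s)‖ := by
  -- first, for ε ∈ (0, t]
  have hstep : ∀ ε ∈ Set.Ioc (0:ℝ) t,
      ENNReal.ofReal |f (x, t) - f (x, ε)| ≤
        ∫⁻ s in Set.Ioc 0 t, ENNReal.ofReal ‖fderiv ℝ f (x, s)‖ := by
    intro ε hε
    have hεt : ε ≤ t := hε.2
    have hpos : ∀ s ∈ Set.uIcc ε t, 0 < s := by
      intro s hs
      rw [Set.uIcc_of_le hεt] at hs
      exact lt_of_lt_of_le hε.1 hs.1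
    have hD : ∀ s ∈ Set.uIcc ε t,
        HasDerivAt (fun s => f (x, s)) ((fderiv ℝ f (x, s)) ((0:ℝ), (1:ℝ))) s := by
      intro s hs
      have hF : HasFDerivAt f (fderiv ℝ f (x, s)) (x, s) := hasFDeriv_of_pos hf (hpos s hs)
      have hpath : HasDerivAt (fun s : ℝ => ((x, s) : ℝ × ℝ)) ((0:ℝ), (1:ℝ)) s :=
        (hasDerivAt_const s x).prodMk (hasDerivAt_id s)
      exact hF.comp_hasDerivAt s hpath
    have hDc : ContinuousOn (fun s => (fderiv ℝ f (x, s)) ((0:ℝ), (1:ℝ))) (Set.uIcc ε t) := by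
      apply ContinuousOn.clm_apply _ continuousOn_const
      apply (fderiv_contOn hf).comp
        ((continuous_const.prodMk continuous_id).continuousOn)
      intro s hs
      exact ⟨trivial, hpos s hs⟩
    calc ENNReal.ofReal |f (x, t) - f (x, ε)|
        ≤ ∫⁻ s in Set.Ioc ε t, ENNReal.ofReal |(fderiv ℝ f (x, s)) ((0:ℝ), (1:ℝ))| :=
          ftc_bound hεt hD hDc
      _ ≤ ∫⁻ s in Set.Ioc ε t, ENNReal.ofReal ‖fderiv ℝ f (x, s)‖ := by
          apply setLIntegral_mono' measurableSet_Ioc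
          intro s _
          apply ENNReal.ofReal_le_ofReal
          calc |(fderiv ℝ f (x, s)) ((0:ℝ), (1:ℝ))|
              = ‖(fderiv ℝ f (x, s)) ((0:ℝ), (1:ℝ))‖ := (Real.norm_eq_abs _).symm
            _ ≤ ‖fderiv ℝ f (x, s)‖ * ‖((0:ℝ), (1:ℝ))‖ :=
                (fderiv ℝ f (x, s)).le_opNorm _
            _ = ‖fderiv ℝ f (x, s)‖ := by rw [norm01, mul_one]
      _ ≤ ∫⁻ s in Set.Ioc 0 t, ENNReal.ofReal ‖fderiv ℝ f (x, s)‖ :=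
          lintegral_mono_set (Set.Ioc_subset_Ioc_left hε.1.le)
  -- then take the limit ε → 0⁺
  have hcont : Tendsto (fun ε => ENNReal.ofReal |f (x, t) - f (x, ε)|)
      (nhdsWithin 0 (Set.Ioi 0)) (nhds (ENNReal.ofReal |f (x, t) - f (x, 0)|)) := by
    apply (ENNReal.continuous_ofReal.tendsto _).comp
    apply (continuous_abs.tendsto _).comp
    apply Tendsto.const_sub
    have h0 : ContinuousWithinAt (fun s : ℝ => f (x, s)) (Set.Ici 0) 0 := by
      apply (hf.continuousOn.comp ((continuous_const.prodMk continuous_id).continuousOn) _) 0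
        (by simp : (0:ℝ) ∈ Set.Ici (0:ℝ))
      intro s hs
      exact ⟨trivial, hs⟩
    exact h0.tendsto.mono_left (nhdsWithin_mono 0 Set.Ioi_subset_Ici_self)
  apply le_of_tendsto hcont
  filter_upwards [Ioc_mem_nhdsGT ht] with ε hε
  exact hstep ε hε

/-- horizontal pointwise FTC bound -/
lemma ptwise_horiz (hf : ContDiffOn ℝ 1 f (Set.univ ×ˢ Set.Ici 0)) {x t h : ℝ}
    (ht : 0 < t) (hh : 0 < h) :
    ENNReal.ofReal |f (x + h, t) - f (x, t)| ≤
      ∫⁻ u in Set.Ioc 0 h, ENNReal.ofReal ‖fderiv ℝ f (x + u, t)‖ := by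
  have hD : ∀ u ∈ Set.uIcc 0 h,
      HasDerivAt (fun u => f (x + u, t)) ((fderiv ℝ f (x + u, t)) ((1:ℝ), (0:ℝ))) u := by
    intro u _
    have hF : HasFDerivAt f (fderiv ℝ f (x + u, t)) (x + u, t) :=
      hasFDeriv_of_pos hf ht
    have hpath : HasDerivAt (fun u : ℝ => ((x + u, t) : ℝ × ℝ)) ((1:ℝ), (0:ℝ)) u :=
      ((hasDerivAt_id u).const_add x).prodMk (hasDerivAt_const u t)
    exact hF.comp_hasDerivAt u hpath
  have hDc : ContinuousOn (fun u => (fderiv ℝ f (x + u, t)) ((1:ℝ), (0:ℝ))) (Set.uIcc 0 h) := by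
    apply ContinuousOn.clm_apply _ continuousOn_const
    apply (fderiv_contOn hf).comp
      (((continuous_const.add continuous_id).prodMk continuous_const).continuousOn)
    intro u _
    exact ⟨trivial, ht⟩
  have h0 : f (x + h, t) - f (x, t)
      = (fun u => f (x + u, t)) h - (fun u => f (x + u, t)) 0 := by
    simp
  rw [h0]
  calc ENNReal.ofReal |(fun u => f (x + u, t)) h - (fun u => f (x + u, t)) 0|
      ≤ ∫⁻ u in Set.Ioc 0 h, ENNReal.ofReal |(fderiv ℝ f (x + u, t)) ((1:ℝ), (0:ℝ))| :=
        ftc_bound hh.le hD hDc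
    _ ≤ ∫⁻ u in Set.Ioc 0 h, ENNReal.ofReal ‖fderiv ℝ f (x + u, t)‖ := by
        apply setLIntegral_mono' measurableSet_Ioc
        intro u _
        apply ENNReal.ofReal_le_ofReal
        calc |(fderiv ℝ f (x + u, t)) ((1:ℝ), (0:ℝ))|
            = ‖(fderiv ℝ f (x + u, t)) ((1:ℝ), (0:ℝ))‖ := (Real.norm_eq_abs _).symm
          _ ≤ ‖fderiv ℝ f (x + u, t)‖ * ‖((1:ℝ), (0:ℝ))‖ :=
              (fderiv ℝ f (x + u, t)).le_opNorm _
          _ = ‖fderiv ℝ f (x + u, t)‖ := by rw [norm10, mul_one]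

end

/-- One-dimensional trace estimate: for `f : ℝ × [0,∞) → ℝ` continuously differentiable
up to the boundary with gradient in `L_{p,q}(ℝ²₊, y^α dx dy)`, the Besov seminorm
`‖f(·,0)‖_{b^ℓ_{p,q}(ℝ)}`, `ℓ = 1 - (1+α)/q`, is controlled by the weighted mixed norm
of the full gradient `Df`.  The constant `N` depends only on `p`, `q`, `α`. -/
theorem trace_besov_dim_one (p q α : ℝ) (hp : 1 ≤ p) (hq : 1 ≤ q)
    (hα1 : -1 < α) (hα2 : α < q - 1) (ℓ : ℝ) (hℓ : ℓ = 1 - (1 + α) / q) :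
    ∃ N : ℝ, 0 < N ∧ ∀ f : ℝ × ℝ → ℝ,
      ContDiffOn ℝ 1 f (Set.univ ×ˢ Set.Ici 0) →
      (∫⁻ y in Set.Ioi (0 : ℝ),
          (∫⁻ x, ENNReal.ofReal (‖fderiv ℝ f (x, y)‖ ^ p)) ^ (q / p) *
            ENNReal.ofReal (y ^ α)) ≠ ⊤ →
      (∫⁻ h : ℝ,
          eLpNorm (fun x => f (x + h, 0) - f (x, 0)) (ENNReal.ofReal p) volume ^ q *
            ENNReal.ofReal (|h| ^ (-(ℓ * q) - 1))) ^ (1 / q)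
        ≤ ENNReal.ofReal N *
          (∫⁻ y in Set.Ioi (0 : ℝ),
            (∫⁻ x, ENNReal.ofReal (‖fderiv ℝ f (x, y)‖ ^ p)) ^ (q / p) *
              ENNReal.ofReal (y ^ α)) ^ (1 / q) := by
  have hq0 : 0 < q := lt_of_lt_of_le one_pos hq
  have hp0 : 0 < p := lt_of_lt_of_le one_pos hp
  set σ : ℝ := q - 1 - α with hσdef
  have hσ0 : 0 < σ := by rw [hσdef]; linarith
  have hσq : σ < q := by rw [hσdef]; linarith
  have hℓq : ℓ * q = σ := by
    rw [hℓ, hσdef]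
    field_simp
    ring
  have hexp : -(ℓ * q) - 1 = -σ - 1 := by rw [hℓq]
  obtain ⟨C, hC, hhardy⟩ := hardy2 (q := q) (σ := σ) hq hσ0 hσq
  set M : ℝ := 2 * 3 ^ q * C with hMdef
  have hM : 0 < M := by positivity
  refine ⟨M ^ (1/q), by positivity, ?_⟩
  intro f hf _hfin
  -- the gradient kernel and mixed norms
  set g : ℝ × ℝ → ℝ≥0∞ := fun z => ENNReal.ofReal ‖fderiv ℝ f z‖ with hgdef
  have hg : Measurable g := ENNReal.measurable_ofReal.comp (measurable_fderiv ℝ f).norm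
  have hgun : Measurable (Function.uncurry fun x s : ℝ => g (x, s)) := by
    exact hg
  set Gp : ℝ → ℝ≥0∞ := fun y => ∫⁻ x, g (x, y) ^ p with hGpdef
  have hGpm : Measurable Gp := by
    apply Measurable.lintegral_prod_left (f := fun x y => g (x, y) ^ p)
    exact hg.pow_const _
  set G : ℝ → ℝ≥0∞ := fun y => Gp y ^ (1/p) with hGdef
  have hGm : Measurable G := hGpm.pow_const _
  -- RHS rewriting
  have hRHS : (∫⁻ y in Set.Ioi (0:ℝ),
        (∫⁻ x, ENNReal.ofReal (‖fderiv ℝ f (x, y)‖ ^ p)) ^ (q / p) *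
          ENNReal.ofReal (y ^ α))
      = ∫⁻ y in Set.Ioi (0:ℝ), Gp y ^ (q/p) * ENNReal.ofReal (y ^ α) := by
    apply lintegral_congr
    intro y
    congr 2
    apply lintegral_congr
    intro x
    rw [hgdef]
    rw [ENNReal.ofReal_rpow_of_nonneg (norm_nonneg _) hp0.le]
  -- vertical Lp bound
  have hVb : ∀ t : ℝ, 0 < t →
      (∫⁻ x, (ENNReal.ofReal |f (x, t) - f (x, 0)|) ^ p) ^ (1/p)
        ≤ ∫⁻ s in Set.Ioc 0 t, G s := by
    intro t ht
    calc (∫⁻ x, (ENNReal.ofReal |f (x, t) - f (x, 0)|) ^ p) ^ (1/p)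
        ≤ (∫⁻ x, (∫⁻ s in Set.Ioc 0 t, g (x, s)) ^ p) ^ (1/p) := by
          apply ENNReal.rpow_le_rpow _ (by positivity)
          apply lintegral_mono
          intro x
          exact ENNReal.rpow_le_rpow (ptwise_vert hf ht) hp0.le
      _ ≤ ∫⁻ s in Set.Ioc 0 t, (∫⁻ x, g (x, s) ^ p) ^ (1/p) :=
          lintegral_minkowski volume (volume.restrict (Set.Ioc 0 t)) hp hgun
      _ = ∫⁻ s in Set.Ioc 0 t, G s := rfl
  -- horizontal Lp bound
  have hHb : ∀ t h : ℝ, 0 < t → 0 < h →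
      (∫⁻ x, (ENNReal.ofReal |f (x + h, t) - f (x, t)|) ^ p) ^ (1/p)
        ≤ ENNReal.ofReal h * G t := by
    intro t h ht hh
    have hker : Measurable (Function.uncurry fun x u : ℝ => g (x + u, t)) := by
      apply hg.comp
      exact ((measurable_fst.add measurable_snd).prodMk measurable_const)
    calc (∫⁻ x, (ENNReal.ofReal |f (x + h, t) - f (x, t)|) ^ p) ^ (1/p)
        ≤ (∫⁻ x, (∫⁻ u in Set.Ioc 0 h, g (x + u, t)) ^ p) ^ (1/p) := by
          apply ENNReal.rpow_le_rpow _ (by positivity)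
          apply lintegral_mono
          intro x
          exact ENNReal.rpow_le_rpow (ptwise_horiz hf ht hh) hp0.le
      _ ≤ ∫⁻ u in Set.Ioc 0 h, (∫⁻ x, g (x + u, t) ^ p) ^ (1/p) :=
          lintegral_minkowski volume (volume.restrict (Set.Ioc 0 h)) hp hker
      _ = ∫⁻ u in Set.Ioc 0 h, G t := by
          apply setLIntegral_congr_fun measurableSet_Ioc
          intro u hu
          beta_reduce
          rw [hGdef]
          congr 1
          exact lintegral_add_right_eq_self (fun x => g (x, t) ^ p) u
      _ = ENNReal.ofReal h * G t := by
          rw [setLIntegral_const, Real.volume_Ioc, sub_zero, mul_comm]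
  -- the difference quotient quantity
  set A : ℝ → ℝ≥0∞ :=
    fun h => (∫⁻ x, (ENNReal.ofReal |f (x + h, 0) - f (x, 0)|) ^ p) ^ (1/p) with hAdef
  have hcontf : ∀ t : ℝ, 0 ≤ t → Continuous fun x => f (x, t) := by
    intro t ht
    rw [← continuousOn_univ]
    apply hf.continuousOn.comp ((continuous_id.prodMk continuous_const).continuousOn)
    intro x _
    exact ⟨trivial, ht⟩
  -- main per-h bound
  have hAbound : ∀ h : ℝ, 0 < h → A h ≤ 3 * ∫⁻ s in Set.Ioc 0 (2*h), G s := by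
    intro h hh
    set J := ∫⁻ s in Set.Ioc 0 (2*h), G s with hJdef
    have ht3 : ∀ t ∈ Set.Ioc h (2*h), A h ≤ 2 * J + ENNReal.ofReal h * G t := by
      intro t htm
      have ht : 0 < t := lt_trans hh htm.1
      set u1 : ℝ → ℝ≥0∞ := fun x => ENNReal.ofReal |f (x + h, t) - f (x + h, 0)| with hu1def
      set u2 : ℝ → ℝ≥0∞ := fun x => ENNReal.ofReal |f (x + h, t) - f (x, t)| with hu2def
      set u3 : ℝ → ℝ≥0∞ := fun x => ENNReal.ofReal |f (x, t) - f (x, 0)| with hu3def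
      have hu3m : Measurable u3 :=
        (ENNReal.continuous_ofReal.comp
          (((hcontf t ht.le).sub (hcontf 0 le_rfl)).abs)).measurable
      have hu1m : Measurable u1 := hu3m.comp (continuous_add_right h).measurable
      have hu2m : Measurable u2 :=
        (ENNReal.continuous_ofReal.comp
          ((((hcontf t ht.le).comp (continuous_add_right h)).sub (hcontf t ht.le)).abs)).measurable
      have hptw : ∀ x, ENNReal.ofReal |f (x + h, 0) - f (x, 0)| ≤ u1 x + u2 x + u3 x := by
        intro x
        have habs : |f (x + h, 0) - f (x, 0)|
            ≤ |f (x + h, t) - f (x + h, 0)| + |f (x + h, t) - f (x, t)|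
              + |f (x, t) - f (x, 0)| := by
          have hdec : f (x + h, 0) - f (x, 0)
              = -(f (x + h, t) - f (x + h, 0)) + (f (x + h, t) - f (x, t))
                + (f (x, t) - f (x, 0)) := by ring
          rw [hdec]
          calc |(-(f (x + h, t) - f (x + h, 0)) + (f (x + h, t) - f (x, t)))
                + (f (x, t) - f (x, 0))|
              ≤ |(-(f (x + h, t) - f (x + h, 0)) + (f (x + h, t) - f (x, t)))|
                + |f (x, t) - f (x, 0)| := abs_add_le _ _
            _ ≤ (|(-(f (x + h, t) - f (x + h, 0)))| + |f (x + h, t) - f (x, t)|)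
                + |f (x, t) - f (x, 0)| := by
                  apply add_le_add (abs_add_le _ _) le_rfl
            _ = |f (x + h, t) - f (x + h, 0)| + |f (x + h, t) - f (x, t)|
                + |f (x, t) - f (x, 0)| := by rw [abs_neg]
        calc ENNReal.ofReal |f (x + h, 0) - f (x, 0)|
            ≤ ENNReal.ofReal (|f (x + h, t) - f (x + h, 0)| + |f (x + h, t) - f (x, t)|
                + |f (x, t) - f (x, 0)|) := ENNReal.ofReal_le_ofReal habs
          _ ≤ (ENNReal.ofReal (|f (x + h, t) - f (x + h, 0)| + |f (x + h, t) - f (x, t)|))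
                + u3 x := ENNReal.ofReal_add_le
          _ ≤ u1 x + u2 x + u3 x := add_le_add ENNReal.ofReal_add_le le_rfl
      have htri : A h ≤ (∫⁻ x, u1 x ^ p) ^ (1/p) + (∫⁻ x, u2 x ^ p) ^ (1/p)
          + (∫⁻ x, u3 x ^ p) ^ (1/p) := by
        have e2 := ENNReal.lintegral_Lp_add_le (μ := volume)
          (f := fun y => u1 y + u2 y) (g := u3)
          ((hu1m.add hu2m).aemeasurable) hu3m.aemeasurable hp
        have e3 := ENNReal.lintegral_Lp_add_le (μ := volume)
          (f := u1) (g := u2) hu1m.aemeasurable hu2m.aemeasurable hp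
        simp only [Pi.add_apply] at e2 e3
        calc A h ≤ (∫⁻ x, (u1 x + u2 x + u3 x) ^ p) ^ (1/p) := by
              rw [hAdef]
              apply ENNReal.rpow_le_rpow _ (by positivity)
              apply lintegral_mono
              intro x
              exact ENNReal.rpow_le_rpow (hptw x) hp0.le
          _ ≤ (∫⁻ x, (u1 x + u2 x) ^ p) ^ (1/p) + (∫⁻ x, u3 x ^ p) ^ (1/p) := e2
          _ ≤ ((∫⁻ x, u1 x ^ p) ^ (1/p) + (∫⁻ x, u2 x ^ p) ^ (1/p))
              + (∫⁻ x, u3 x ^ p) ^ (1/p) := add_le_add e3 le_rfl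
      have hb3 : (∫⁻ x, u3 x ^ p) ^ (1/p) ≤ J :=
        (hVb t ht).trans (lintegral_mono_set (Set.Ioc_subset_Ioc_right htm.2))
      have hb1 : (∫⁻ x, u1 x ^ p) ^ (1/p) ≤ J := by
        have heq : (∫⁻ x, u1 x ^ p) = ∫⁻ x, u3 x ^ p :=
          lintegral_add_right_eq_self (fun x => u3 x ^ p) h
        rw [heq]
        exact hb3
      have hb2 : (∫⁻ x, u2 x ^ p) ^ (1/p) ≤ ENNReal.ofReal h * G t := hHb t h ht hh
      calc A h ≤ (∫⁻ x, u1 x ^ p) ^ (1/p) + (∫⁻ x, u2 x ^ p) ^ (1/p)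
            + (∫⁻ x, u3 x ^ p) ^ (1/p) := htri
        _ ≤ J + ENNReal.ofReal h * G t + J := add_le_add (add_le_add hb1 hb2) hb3
        _ = 2 * J + ENNReal.ofReal h * G t := by ring
    have havg : ENNReal.ofReal h * A h ≤ ENNReal.ofReal h * (3 * J) := by
      calc ENNReal.ofReal h * A h = A h * volume (Set.Ioc h (2*h)) := by
            rw [Real.volume_Ioc, show 2*h - h = h by ring, mul_comm]
        _ = ∫⁻ _ in Set.Ioc h (2*h), A h := (setLIntegral_const _ _).symm
        _ ≤ ∫⁻ t in Set.Ioc h (2*h), (2 * J + ENNReal.ofReal h * G t) :=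
            setLIntegral_mono' measurableSet_Ioc ht3
        _ = 2 * J * volume (Set.Ioc h (2*h))
            + ENNReal.ofReal h * ∫⁻ t in Set.Ioc h (2*h), G t := by
            rw [lintegral_add_left measurable_const, setLIntegral_const,
              lintegral_const_mul' _ _ ENNReal.ofReal_ne_top]
        _ ≤ 2 * J * ENNReal.ofReal h + ENNReal.ofReal h * J := by
            rw [Real.volume_Ioc, show 2*h - h = h by ring]
            apply add_le_add le_rfl
            apply mul_le_mul_right
            exact lintegral_mono_set (Set.Ioc_subset_Ioc_left hh.le)
        _ = ENNReal.ofReal h * (3 * J) := by ring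
    exact (ENNReal.mul_le_mul_iff_right (ENNReal.ofReal_pos.mpr hh).ne' ENNReal.ofReal_ne_top).mp havg
  -- identify the eLpNorm with A
  have hA_eLp : ∀ h : ℝ,
      eLpNorm (fun x => f (x + h, 0) - f (x, 0)) (ENNReal.ofReal p) volume = A h := by
    intro h
    rw [eLpNorm_eq_lintegral_rpow_enorm_toReal (ENNReal.ofReal_pos.mpr hp0).ne'
      ENNReal.ofReal_ne_top, ENNReal.toReal_ofReal hp0.le, hAdef]
    congr 1
    apply lintegral_congr
    intro x
    congr 1
    rw [← ofReal_norm, Real.norm_eq_abs]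
  -- symmetry in h
  have hAsym : ∀ h : ℝ, A (-h) = A h := by
    intro h
    rw [hAdef]
    simp only
    congr 1
    have h1 : (∫⁻ x, (ENNReal.ofReal |f (x + -h, 0) - f (x, 0)|) ^ p)
        = ∫⁻ x, (ENNReal.ofReal |f (x + h + -h, 0) - f (x + h, 0)|) ^ p :=
      (lintegral_add_right_eq_self
        (fun x => (ENNReal.ofReal |f (x + -h, 0) - f (x, 0)|) ^ p) h).symm
    rw [h1]
    apply lintegral_congr
    intro x
    rw [show x + h + -h = x by ring, abs_sub_comm]
  -- split the h-integral
  set W : ℝ → ℝ≥0∞ := fun h => A h ^ q * ENNReal.ofReal (|h| ^ (-σ - 1)) with hWdef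
  have hgoal_eq : (∫⁻ h : ℝ,
      eLpNorm (fun x => f (x + h, 0) - f (x, 0)) (ENNReal.ofReal p) volume ^ q *
        ENNReal.ofReal (|h| ^ (-(ℓ * q) - 1))) = ∫⁻ h, W h := by
    apply lintegral_congr
    intro h
    rw [hA_eLp h, hexp]
  have hWneg : ∀ h : ℝ, W (-h) = W h := by
    intro h
    rw [hWdef]
    simp only
    rw [hAsym h, abs_neg]
  have hsplit : (∫⁻ h, W h) = 2 * ∫⁻ h in Set.Ioi (0:ℝ), W h := by
    have hae : (Set.univ : Set ℝ) =ᵐ[volume] (Set.Iio 0 ∪ Set.Ioi 0 : Set ℝ) := by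
      rw [Set.Iio_union_Ioi]
      symm
      rw [MeasureTheory.ae_eq_univ]
      simp
    calc (∫⁻ h, W h) = ∫⁻ h in Set.univ, W h := (setLIntegral_univ _).symm
      _ = ∫⁻ h in (Set.Iio 0 ∪ Set.Ioi 0 : Set ℝ), W h := by
          rw [Measure.restrict_congr_set hae]
      _ = (∫⁻ h in Set.Iio (0:ℝ), W h) + ∫⁻ h in Set.Ioi (0:ℝ), W h :=
          lintegral_union measurableSet_Ioi
            (by
              rw [Set.disjoint_left]
              intro x hx hx'
              exact lt_asymm (Set.mem_Iio.mp hx) (Set.mem_Ioi.mp hx'))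
      _ = 2 * ∫⁻ h in Set.Ioi (0:ℝ), W h := by
          have hneg : (∫⁻ h in Set.Iio (0:ℝ), W h) = ∫⁻ h in Set.Ioi (0:ℝ), W h := by
            have hpre : (Neg.neg ⁻¹' (Set.Iio (0:ℝ)) : Set ℝ) = Set.Ioi 0 := by
              ext x
              simp
            have := (Measure.measurePreserving_neg (volume : Measure ℝ)).setLIntegral_comp_preimage_emb
              (Homeomorph.neg ℝ).measurableEmbedding W (Set.Iio 0)
            rw [hpre] at this
            rw [← this]
            apply setLIntegral_congr_fun measurableSet_Ioi
            intro h hh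
            exact hWneg h
          rw [hneg, two_mul]
  -- apply hardy
  have hIle : (∫⁻ r in Set.Ioi (0:ℝ), W r)
      ≤ (3:ℝ≥0∞) ^ q * (ENNReal.ofReal C
          * ∫⁻ s in Set.Ioi (0:ℝ), G s ^ q * ENNReal.ofReal (s ^ (q - 1 - σ))) := by
    calc (∫⁻ r in Set.Ioi (0:ℝ), W r)
        ≤ ∫⁻ r in Set.Ioi (0:ℝ), (3:ℝ≥0∞) ^ q
            * ((∫⁻ s in Set.Ioc 0 (2*r), G s) ^ q * ENNReal.ofReal (r ^ (-σ - 1))) := by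
          apply setLIntegral_mono' measurableSet_Ioi
          intro r hr
          rw [hWdef]
          simp only
          rw [abs_of_pos hr]
          calc A r ^ q * ENNReal.ofReal (r ^ (-σ - 1))
              ≤ (3 * ∫⁻ s in Set.Ioc 0 (2*r), G s) ^ q * ENNReal.ofReal (r ^ (-σ - 1)) :=
                mul_le_mul_left (ENNReal.rpow_le_rpow (hAbound r hr) hq0.le) _
            _ = (3:ℝ≥0∞) ^ q
                * ((∫⁻ s in Set.Ioc 0 (2*r), G s) ^ q * ENNReal.ofReal (r ^ (-σ - 1))) := by
                rw [ENNReal.mul_rpow_of_nonneg _ _ hq0.le]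
                ring
      _ = (3:ℝ≥0∞) ^ q * ∫⁻ r in Set.Ioi (0:ℝ),
            (∫⁻ s in Set.Ioc 0 (2*r), G s) ^ q * ENNReal.ofReal (r ^ (-σ - 1)) :=
          lintegral_const_mul' _ _
            (ENNReal.rpow_ne_top_of_nonneg hq0.le (by norm_num))
      _ ≤ (3:ℝ≥0∞) ^ q * (ENNReal.ofReal C
          * ∫⁻ s in Set.Ioi (0:ℝ), G s ^ q * ENNReal.ofReal (s ^ (q - 1 - σ))) :=
          mul_le_mul_right (hhardy hGm) _
  -- identify the RHS of hardy with the weighted norm of the gradient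
  have hGq : (∫⁻ s in Set.Ioi (0:ℝ), G s ^ q * ENNReal.ofReal (s ^ (q - 1 - σ)))
      = ∫⁻ y in Set.Ioi (0:ℝ), Gp y ^ (q/p) * ENNReal.ofReal (y ^ α) := by
    apply lintegral_congr
    intro s
    rw [hGdef]
    simp only
    rw [← ENNReal.rpow_mul, show (1:ℝ)/p * q = q/p by ring,
      show q - 1 - σ = α by rw [hσdef]; ring]
  -- wrap up
  have hconst : (2:ℝ≥0∞) * ((3:ℝ≥0∞) ^ q * ENNReal.ofReal C) = ENNReal.ofReal M := by
    rw [hMdef, ENNReal.ofReal_mul (by positivity), ENNReal.ofReal_mul (by norm_num : (0:ℝ) ≤ 2)]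
    rw [← mul_assoc]
    congr 1
    congr 1
    · norm_num
    · rw [show ((3:ℝ≥0∞)) = ENNReal.ofReal (3:ℝ) by norm_num,
        ENNReal.ofReal_rpow_of_pos (by norm_num : (0:ℝ) < 3)]
  have hmain : (∫⁻ h, W h)
      ≤ ENNReal.ofReal M * ∫⁻ y in Set.Ioi (0:ℝ), Gp y ^ (q/p) * ENNReal.ofReal (y ^ α) := by
    calc (∫⁻ h, W h) = 2 * ∫⁻ h in Set.Ioi (0:ℝ), W h := hsplit
      _ ≤ 2 * ((3:ℝ≥0∞) ^ q * (ENNReal.ofReal C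
          * ∫⁻ s in Set.Ioi (0:ℝ), G s ^ q * ENNReal.ofReal (s ^ (q - 1 - σ)))) :=
          mul_le_mul_right hIle _
      _ = (2:ℝ≥0∞) * ((3:ℝ≥0∞) ^ q * ENNReal.ofReal C)
          * ∫⁻ s in Set.Ioi (0:ℝ), G s ^ q * ENNReal.ofReal (s ^ (q - 1 - σ)) := by ring
      _ = ENNReal.ofReal M * ∫⁻ y in Set.Ioi (0:ℝ), Gp y ^ (q/p) * ENNReal.ofReal (y ^ α) := by
          rw [hconst, hGq]
  calc (∫⁻ h : ℝ,
      eLpNorm (fun x => f (x + h, 0) - f (x, 0)) (ENNReal.ofReal p) volume ^ q *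
        ENNReal.ofReal (|h| ^ (-(ℓ * q) - 1))) ^ (1 / q)
      = (∫⁻ h, W h) ^ (1/q) := by rw [hgoal_eq]
    _ ≤ (ENNReal.ofReal M * ∫⁻ y in Set.Ioi (0:ℝ),
          Gp y ^ (q/p) * ENNReal.ofReal (y ^ α)) ^ (1/q) :=
        ENNReal.rpow_le_rpow hmain (by positivity)
    _ = ENNReal.ofReal (M ^ (1/q)) * (∫⁻ y in Set.Ioi (0:ℝ),
          Gp y ^ (q/p) * ENNReal.ofReal (y ^ α)) ^ (1/q) := by
        rw [ENNReal.mul_rpow_of_nonneg _ _ (by positivity),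
          ENNReal.ofReal_rpow_of_pos hM]
    _ = ENNReal.ofReal (M ^ (1/q)) * (∫⁻ y in Set.Ioi (0 : ℝ),
          (∫⁻ x, ENNReal.ofReal (‖fderiv ℝ f (x, y)‖ ^ p)) ^ (q / p) *
            ENNReal.ofReal (y ^ α)) ^ (1 / q) := by rw [hRHS]
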